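/- Let f ∈ ℂ[X₁, …, Xₙ] be a polynomial lying in the subalgebra ℂ[X₁², …, Xₙ²] generated by the squares of the variables. Then for all indices i ≠ j, the linear polynomial (X_i − X_j) divides f if and only if (X_i + X_j) divides f; moreover if X_i divides f then X_i² divides f. -/
import Mathlib
set_option maxRecDepth 4000

open MvPolynomial

/-- Algebra endomorphism negating the `k`-th variable. -/
noncomputable def negVar {n : ℕ} (k : Fin n) :
    MvPolynomial (Fin n) ℂ →ₐ[ℂ] MvPolynomial (Fin n) ℂ :=
  MvPolynomial.aeval (fun l => if l = k then -MvPolynomial.X l else MvPolynomial.X l)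

lemma negVar_X {n : ℕ} (k l : Fin n) :
    negVar k (MvPolynomial.X l) = if l = k then -MvPolynomial.X l else MvPolynomial.X l := by
  simp [negVar]

lemma negVar_fix {n : ℕ} (k : Fin n) (f : MvPolynomial (Fin n) ℂ)
    (hf : f ∈ Algebra.adjoin ℂ
      (Set.range fun i : Fin n => (MvPolynomial.X i : MvPolynomial (Fin n) ℂ) ^ 2)) :
    negVar k f = f := by
  induction hf using Algebra.adjoin_induction with
  | mem x hx =>
    obtain ⟨i, rfl⟩ := hx
    rw [map_pow, negVar_X]
    split <;> simp
  | algebraMap r => simp [negVar]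
  | add x y _ _ hx hy => rw [map_add, hx, hy]
  | mul x y _ _ hx hy => rw [map_mul, hx, hy]

lemma negVar_monomial {n : ℕ} (k : Fin n) (d : Fin n →₀ ℕ) (c : ℂ) :
    negVar k (MvPolynomial.monomial d c)
      = (-1 : MvPolynomial (Fin n) ℂ) ^ (d k) * MvPolynomial.monomial d c := by
  classical
  rw [negVar, aeval_monomial]
  rw [show (MvPolynomial.monomial d c : MvPolynomial (Fin n) ℂ)
      = algebraMap ℂ _ c * d.prod fun i m => (MvPolynomial.X i) ^ m by
    simp [monomial_eq, Algebra.algebraMap_eq_smul_one, smul_eq_C_mul]]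
  rw [Finsupp.prod, Finsupp.prod]
  have : ∀ l ∈ d.support,
      (if l = k then -MvPolynomial.X (R := ℂ) l else MvPolynomial.X l) ^ d l
        = ((if l = k then (-1 : MvPolynomial (Fin n) ℂ) ^ d l else 1)
            * MvPolynomial.X l ^ d l) := by
    intro l _
    split
    · rw [neg_pow]
    · rw [one_mul]
  rw [Finset.prod_congr rfl this, Finset.prod_mul_distrib]
  have h2 : (∏ l ∈ d.support, if l = k then (-1 : MvPolynomial (Fin n) ℂ) ^ d l else 1)
      = (-1 : MvPolynomial (Fin n) ℂ) ^ d k := by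
    rw [Finset.prod_ite_eq' d.support k (fun l => (-1 : MvPolynomial (Fin n) ℂ) ^ d l)]
    split
    · rfl
    · next h => simp [Finsupp.notMem_support_iff.mp h]
  rw [h2]; ring

lemma coeff_negVar {n : ℕ} (k : Fin n) (p : MvPolynomial (Fin n) ℂ) (m : Fin n →₀ ℕ) :
    MvPolynomial.coeff m (negVar k p) = (-1 : ℂ) ^ (m k) * MvPolynomial.coeff m p := by
  classical
  conv_lhs => rw [p.as_sum, map_sum]
  rw [MvPolynomial.coeff_sum]
  have : ∀ d ∈ p.support,
      MvPolynomial.coeff m (negVar k (MvPolynomial.monomial d (MvPolynomial.coeff d p)))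
        = if d = m then (-1 : ℂ) ^ (m k) * MvPolynomial.coeff d p else 0 := by
    intro d _
    rw [negVar_monomial]
    have : (-1 : MvPolynomial (Fin n) ℂ) ^ d k = MvPolynomial.C ((-1 : ℂ) ^ d k) := by
      simp
    rw [this, MvPolynomial.coeff_C_mul, MvPolynomial.coeff_monomial]
    split
    · next h => subst h; rfl
    · ring
  rw [Finset.sum_congr rfl this, Finset.sum_ite_eq' p.support m]
  split
  · rfl
  · next h => simp [MvPolynomial.notMem_support_iff.mp h]

lemma X_dvd_of_coeff {n : ℕ} (k : Fin n) (g : MvPolynomial (Fin n) ℂ)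
    (h : ∀ m : Fin n →₀ ℕ, m k = 0 → MvPolynomial.coeff m g = 0) :
    MvPolynomial.X k ∣ g := by
  classical
  rw [MvPolynomial.X_dvd_iff_modMonomial_eq_zero]
  ext m
  rw [MvPolynomial.coeff_zero]
  by_cases hle : Finsupp.single k 1 ≤ m
  · exact MvPolynomial.coeff_modMonomial_of_le g hle
  · rw [MvPolynomial.coeff_modMonomial_of_not_le g hle]
    apply h
    by_contra hmk
    exact hle (Finsupp.single_le_iff.mpr (Nat.one_le_iff_ne_zero.mpr hmk))

/-- For `f ∈ ℂ[X₁², …, Xₙ²]`: for `i ≠ j`, `(X_i − X_j) ∣ f ↔ (X_i + X_j) ∣ f`;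
and if `X_i ∣ f` then `X_i² ∣ f`. -/
theorem divisibility_in_square_subalgebra {n : ℕ} (f : MvPolynomial (Fin n) ℂ)
    (hf : f ∈ Algebra.adjoin ℂ
      (Set.range fun i : Fin n => (MvPolynomial.X i : MvPolynomial (Fin n) ℂ) ^ 2)) :
    (∀ i j : Fin n, i ≠ j →
      ((MvPolynomial.X i - MvPolynomial.X j ∣ f) ↔
        (MvPolynomial.X i + MvPolynomial.X j ∣ f))) ∧
    (∀ i : Fin n, MvPolynomial.X i ∣ f → (MvPolynomial.X i : MvPolynomial (Fin n) ℂ) ^ 2 ∣ f) := by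
  constructor
  · intro i j hij
    have hsub : negVar j (MvPolynomial.X i - MvPolynomial.X j)
        = MvPolynomial.X i + MvPolynomial.X j := by
      rw [map_sub, negVar_X, negVar_X, if_neg hij, if_pos rfl]; ring
    have hadd : negVar j (MvPolynomial.X i + MvPolynomial.X j)
        = MvPolynomial.X i - MvPolynomial.X j := by
      rw [map_add, negVar_X, negVar_X, if_neg hij, if_pos rfl]; ring
    constructor
    · intro h
      have := map_dvd (negVar j) h
      rwa [hsub, negVar_fix j f hf] at this
    · intro h
      have := map_dvd (negVar j) h
      rwa [hadd, negVar_fix j f hf] at this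
  · intro i hdvd
    obtain ⟨g, rfl⟩ := hdvd
    have hfix := negVar_fix i _ hf
    rw [map_mul, negVar_X, if_pos rfl, neg_mul] at hfix
    have hg : negVar i g = -g := by
      have hx : (MvPolynomial.X i : MvPolynomial (Fin n) ℂ) ≠ 0 := MvPolynomial.X_ne_zero i
      have h2 : MvPolynomial.X i * negVar i g = MvPolynomial.X i * (-g) := by
        rw [mul_neg, ← hfix]; ring
      exact mul_left_cancel₀ hx h2
    have hdg : MvPolynomial.X i ∣ g := by
      apply X_dvd_of_coeff
      intro m hm
      have hc := congrArg (MvPolynomial.coeff m) hg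
      rw [coeff_negVar, hm, pow_zero, one_mul, MvPolynomial.coeff_neg] at hc
      exact CharZero.eq_neg_self_iff.mp hc
    obtain ⟨h, rfl⟩ := hdg
    exact ⟨h, by ring⟩
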